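/- arXiv:1302.7207 — 4 statements merged into one kernel-verified Lean document; each statement's English description precedes it below -/
import Mathlib

section
/- Let H be a Hilbert space and (Mₙ) a sequence of bounded operators on H such that Re⟨Mₙx,x⟩ ≥ c‖x‖² for all x and n, where c > 0, and such that (Mₙ⁻¹) converges in the weak operator topology to some operator M₀. Then Re⟨M₀y,y⟩ ≥ (c / sup_n ‖Mₙ‖²) ‖y‖² for all y ∈ H; in particular M₀ is invertible. -/
open Filter

lemma accretive_bounded_below {H : Type*} [NormedAddCommGroup H] [InnerProductSpace ℂ H]
    (T : H →L[ℂ] H) (c : ℝ) (h : ∀ y : H, c * ‖y‖ ^ 2 ≤ (inner ℂ (T y) y : ℂ).re) :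
    ∀ v : H, c * ‖v‖ ≤ ‖T v‖ := by
  intro v
  by_cases hv : 0 < ‖v‖
  · refine (mul_le_mul_iff_of_pos_right hv).mp ?_
    calc c * ‖v‖ * ‖v‖ = c * ‖v‖ ^ 2 := by ring
      _ ≤ (inner ℂ (T v) v : ℂ).re := h v
      _ ≤ ‖(inner ℂ (T v) v : ℂ)‖ := Complex.re_le_norm _
      _ ≤ ‖T v‖ * ‖v‖ := norm_inner_le_norm _ _
  · have : v = 0 := by simpa using hv
    simp [this]

lemma accretive_bijective {H : Type*} [NormedAddCommGroup H] [InnerProductSpace ℂ H]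
    [CompleteSpace H] (T : H →L[ℂ] H) (c : ℝ) (hc : 0 < c)
    (h : ∀ y : H, c * ‖y‖ ^ 2 ≤ (inner ℂ (T y) y : ℂ).re) :
    Function.Bijective T := by
  have below := accretive_bounded_below T c h
  have anti : AntilipschitzWith c⁻¹.toNNReal T := by
    refine ContinuousLinearMap.antilipschitz_of_bound T ?_
    intro x
    rw [Real.coe_toNNReal', max_eq_left_of_lt (inv_pos.mpr hc), ← inv_mul_le_iff₀ (inv_pos.mpr hc)]
    simpa using below x
  have hinj : Function.Injective T := anti.injective
  constructor
  · exact hinj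
  · have hr : LinearMap.range (T : H →ₗ[ℂ] H) = ⊤ := by
      have hcl : IsClosed (LinearMap.range (T : H →ₗ[ℂ] H) : Set H) := anti.isClosed_range T.uniformContinuous
      haveI := hcl.completeSpace_coe
      rw [← (LinearMap.range (T : H →ₗ[ℂ] H)).orthogonal_orthogonal, Submodule.eq_top_iff']
      intro v w mem_w_orthogonal
      obtain rfl : w = 0 := by
        rw [← norm_eq_zero, ← sq_eq_zero_iff, ← mul_right_inj' hc.ne', mul_zero]
        refine le_antisymm ?_ (by positivity)
        calc c * ‖w‖ ^ 2 ≤ (inner ℂ (T w) w : ℂ).re := h w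
          _ = (0 : ℂ).re := by have := mem_w_orthogonal _ ⟨w, rfl⟩; exact congrArg Complex.re this
          _ = 0 := rfl
      exact inner_zero_left _
    intro y
    exact LinearMap.mem_range.mp (hr ▸ Submodule.mem_top)

/-- If `(Mₙ)` is a bounded sequence of operators with `Re⟨Mₙx,x⟩ ≥ c‖x‖²` uniformly
(`c > 0`), each with bounded inverse `Rₙ`, and `Rₙ → M₀` in the weak operator topology,
then `Re⟨M₀y,y⟩ ≥ (c / supₙ‖Mₙ‖²)‖y‖²` for all `y`; in particular `M₀` is bijective. -/
theorem stmt_4 {H : Type*} [NormedAddCommGroup H] [InnerProductSpace ℂ H]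
    [CompleteSpace H] (M R : ℕ → (H →L[ℂ] H)) (M₀ : H →L[ℂ] H) (c : ℝ) (hc : 0 < c)
    (hbdd : BddAbove (Set.range fun n => ‖M n‖))
    (hacc : ∀ n, ∀ x : H, c * ‖x‖ ^ 2 ≤ (inner ℂ (M n x) x : ℂ).re)
    (hinv₁ : ∀ n, ∀ x : H, R n (M n x) = x)
    (hinv₂ : ∀ n, ∀ y : H, M n (R n y) = y)
    (hWOT : ∀ x y : H,
      Tendsto (fun n => (inner ℂ y (R n x) : ℂ)) atTop (nhds (inner ℂ y (M₀ x)))) :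
    (∀ y : H, c / (⨆ n, ‖M n‖) ^ 2 * ‖y‖ ^ 2 ≤ (inner ℂ (M₀ y) y : ℂ).re) ∧
      Function.Bijective M₀ := by
  set S := ⨆ n, ‖M n‖ with hSdef
  rcases subsingleton_or_nontrivial H with hH | hH
  · constructor
    · intro y
      have hy : y = 0 := Subsingleton.elim _ _
      simp [hy]
    · exact ⟨fun a b _ => Subsingleton.elim a b, fun y => ⟨y, Subsingleton.elim _ _⟩⟩
  · -- S ≥ c > 0
    obtain ⟨x₀, hx₀⟩ : ∃ x : H, x ≠ 0 := exists_ne 0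
    have hx₀n : 0 < ‖x₀‖ := norm_pos_iff.mpr hx₀
    have hcM0 : c ≤ ‖M 0‖ := by
      have h1 : c * ‖x₀‖ ≤ ‖M 0 x₀‖ :=
        accretive_bounded_below (M 0) c (hacc 0) x₀
      have h2 : ‖M 0 x₀‖ ≤ ‖M 0‖ * ‖x₀‖ := (M 0).le_opNorm x₀
      nlinarith
    have hS : c ≤ S := hcM0.trans (le_ciSup hbdd 0)
    have hSpos : 0 < S := lt_of_lt_of_le hc hS
    have hMS : ∀ n, ‖M n‖ ≤ S := fun n => le_ciSup hbdd n
    have hkey : ∀ y : H, c / S ^ 2 * ‖y‖ ^ 2 ≤ (inner ℂ (M₀ y) y : ℂ).re := by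
      intro y
      have hterm : ∀ n, c / S ^ 2 * ‖y‖ ^ 2 ≤ ((inner ℂ y (R n y) : ℂ)).re := by
        intro n
        have h1 : ‖y‖ ≤ S * ‖R n y‖ := by
          calc ‖y‖ = ‖M n (R n y)‖ := by rw [hinv₂ n y]
            _ ≤ ‖M n‖ * ‖R n y‖ := (M n).le_opNorm _
            _ ≤ S * ‖R n y‖ := by
                have := norm_nonneg (R n y); nlinarith [hMS n]
        have h2 : c * ‖R n y‖ ^ 2 ≤ (inner ℂ (M n (R n y)) (R n y) : ℂ).re := hacc n (R n y)
        rw [hinv₂ n y] at h2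
        have h3 : c / S ^ 2 * ‖y‖ ^ 2 ≤ c * ‖R n y‖ ^ 2 := by
          have h1' : ‖y‖ ^ 2 ≤ S ^ 2 * ‖R n y‖ ^ 2 := by nlinarith [norm_nonneg y]
          rw [div_mul_eq_mul_div, div_le_iff₀ (by positivity)]
          nlinarith [mul_le_mul_of_nonneg_left h1' hc.le]
        linarith
      have hlim : Tendsto (fun n => ((inner ℂ y (R n y) : ℂ)).re) atTop
          (nhds ((inner ℂ y (M₀ y) : ℂ)).re) :=
        (Complex.continuous_re.tendsto _).comp (hWOT y y)
      have := ge_of_tendsto' hlim hterm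
      have hconj : ((inner ℂ (M₀ y) y : ℂ)).re = ((inner ℂ y (M₀ y) : ℂ)).re := by
        rw [← inner_conj_symm]
        exact Complex.conj_re _
      linarith
    refine ⟨hkey, accretive_bijective M₀ (c / S ^ 2) (by positivity) hkey⟩
end

section
/- Let a : ℝⁿ → ℂ be bounded, measurable, and ℤⁿ-periodic (a(x+k) = a(x) for all x ∈ ℝⁿ, k ∈ ℤⁿ). Then the sequence (a(k·))_{k∈ℕ} converges weakly-* in L^∞(ℝⁿ) to the constant ∫_{[0,1]ⁿ} a(y) dy, i.e., for every f ∈ L¹(ℝⁿ), ∫ a(kx) f(x) dx → (∫_{[0,1]ⁿ} a(y) dy)(∫ f(x) dx) as k → ∞. -/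
open Filter MeasureTheory

section MeanValueAux

open Topology Pointwise

variable {n : ℕ}

/-- The fundamental cube `[0,1)ⁿ` as the fundamental domain of the lattice `ℤⁿ`. -/
noncomputable def Dcube (n : ℕ) : Set (Fin n → ℝ) :=
  ZSpan.fundamentalDomain (Pi.basisFun ℝ (Fin n))

lemma Dcube_meas : MeasurableSet (Dcube n) :=
  ZSpan.fundamentalDomain_measurableSet _

lemma Dcube_eq : Dcube n = Set.pi Set.univ (fun _ : Fin n => Set.Ico (0:ℝ) 1) := by
  ext x
  simp [Dcube, ZSpan.fundamentalDomain, Set.mem_pi]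

lemma Dcube_vol : volume (Dcube n) = 1 := by
  rw [Dcube_eq, volume_pi_pi]
  simp [Real.volume_Ico]

lemma Dcube_norm_le {u : Fin n → ℝ} (hu : u ∈ Dcube n) : ‖u‖ ≤ 1 := by
  rw [Dcube_eq] at hu
  refine (pi_norm_le_iff_of_nonneg zero_le_one).mpr fun i => ?_
  have := hu i (Set.mem_univ i)
  rw [Real.norm_eq_abs, abs_le]
  constructor <;> [linarith [this.1]; linarith [this.2]]

lemma integral_Icc_eq_Dcube (a : (Fin n → ℝ) → ℂ) :
    ∫ y in Set.Icc (0 : Fin n → ℝ) 1, a y = ∫ y in Dcube n, a y := by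
  apply setIntegral_congr_set
  have hsub : Dcube n ⊆ Set.Icc (0 : Fin n → ℝ) 1 := by
    rw [Dcube_eq, ← Set.pi_univ_Icc]
    exact Set.pi_mono fun i _ => Set.Ico_subset_Icc_self
  have hIcc : volume (Set.Icc (0 : Fin n → ℝ) 1) = 1 := by
    rw [← Set.pi_univ_Icc, volume_pi_pi]
    simp [Real.volume_Icc]
  have hdiff : volume (Set.Icc (0 : Fin n → ℝ) 1 \ Dcube n) = 0 := by
    rw [measure_diff hsub Dcube_meas.nullMeasurableSet
      (by rw [Dcube_vol]; exact ENNReal.one_ne_top), hIcc, Dcube_vol, tsub_self]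
  refine (MeasureTheory.ae_eq_set.mpr ⟨hdiff, ?_⟩)
  rw [Set.diff_eq_empty.mpr hsub]
  simp

/-- Continuity of translation in `L¹`. -/
lemma aux_trans (f : (Fin n → ℝ) → ℂ) (hf : Integrable f) :
    Tendsto (fun v : Fin n → ℝ => ∫ x, ‖f (x + v) - f x‖) (𝓝 0) (𝓝 0) := by
  haveI : Fact ((1:ENNReal) ≤ 1) := ⟨le_rfl⟩
  set F₁ : Lp ℂ 1 (volume : Measure (Fin n → ℝ)) := (memLp_one_iff_integrable.mpr hf).toLp f with hF₁
  set cm : C((Fin n → ℝ) × (Fin n → ℝ), Fin n → ℝ) := ⟨fun p => p.2 + p.1, by fun_prop⟩ with hcm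
  set tr : C(Fin n → ℝ, C(Fin n → ℝ, Fin n → ℝ)) := cm.curry with htrdef
  have htr_apply : ∀ v x, tr v x = x + v := fun v x => rfl
  have htr : ∀ v, MeasurePreserving (tr v) volume volume := fun v =>
    measurePreserving_add_right volume v
  set G : (Fin n → ℝ) → Lp ℂ 1 (volume : Measure (Fin n → ℝ)) :=
    fun v => Lp.compMeasurePreserving (tr v) (htr v) F₁ with hGdef
  have hG : Tendsto G (𝓝 0) (𝓝 (G 0)) :=
    Filter.Tendsto.compMeasurePreservingLp tendsto_const_nhds (tr.continuous.tendsto 0)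
      htr (htr 0) ENNReal.one_ne_top
  have hcoe : ∀ v, ⇑(G v) =ᵐ[volume] fun x => F₁ (x + v) := by
    intro v
    have h2 := Lp.coeFn_compMeasurePreserving F₁ (htr v)
    filter_upwards [h2] with x hx
    rw [hGdef]
    rw [hx]
    simp only [Function.comp_apply, htr_apply]
  have hG0 : G 0 = F₁ := by
    apply Lp.ext
    filter_upwards [hcoe 0] with x hx
    simpa using hx
  have hkey : ∀ v, (∫ x, ‖f (x + v) - f x‖) = ‖G v - F₁‖ := by
    intro v
    rw [L1.norm_eq_integral_norm]
    have h1 : ⇑(G v - F₁) =ᵐ[volume] ⇑(G v) - ⇑F₁ := Lp.coeFn_sub _ _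
    have h3 : ⇑F₁ =ᵐ[volume] f := MemLp.coeFn_toLp _
    have hmap : Measure.map (fun x : Fin n → ℝ => x + v) volume = volume :=
      (measurePreserving_add_right volume v).map_eq
    have h4 : (⇑F₁ ∘ fun x : Fin n → ℝ => x + v) =ᵐ[volume] (f ∘ fun x => x + v) :=
      MeasureTheory.ae_eq_comp (measurable_add_const v).aemeasurable (by rwa [hmap])
    refine integral_congr_ae ?_
    filter_upwards [h1, hcoe v, h3, h4] with x e1 e2 e3 e4
    have : (G v - F₁) x = f (x + v) - f x := by
      rw [e1]; simp only [Pi.sub_apply]; rw [e2, e3]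
      simpa only [Function.comp_apply] using congrArg (· - f x) e4
    rw [this]
  have hnorm : Tendsto (fun v => ‖G v - F₁‖) (𝓝 0) (𝓝 0) := by
    have h := (hG.sub (tendsto_const_nhds (x := F₁))).norm
    rw [hG0, sub_self, norm_zero] at h
    exact h
  simp only [hkey]
  exact hnorm

/-- The integral of a `ℤⁿ`-periodic function over any translate of the fundamental cube
equals the integral over the cube. -/
lemma claimC (a : (Fin n → ℝ) → ℂ)
    (hper : ∀ (x : Fin n → ℝ) (k : Fin n → ℤ), a (x + fun i => (k i : ℝ)) = a x)
    (t : Fin n → ℝ) :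
    ∫ u in Dcube n, a (t + u) = ∫ u in Dcube n, a u := by
  set L := Submodule.span ℤ (Set.range ⇑(Pi.basisFun ℝ (Fin n))) with hL
  have hFD : IsAddFundamentalDomain L (Dcube n) volume :=
    ZSpan.isAddFundamentalDomain (Pi.basisFun ℝ (Fin n)) volume
  have hinv : ∀ (g : L) (x : Fin n → ℝ), a (g +ᵥ x) = a x := by
    intro g x
    have hcoords : ∀ i, ∃ z : ℤ, (z : ℝ) = (g : Fin n → ℝ) i := fun i =>
      ((Pi.basisFun ℝ (Fin n)).mem_span_iff_repr_mem ℤ g).mp (SetLike.coe_mem g) i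
    choose z hz using hcoords
    have : (g : Fin n → ℝ) = fun i => (z i : ℝ) := by
      funext i; exact (hz i).symm
    show a ((g : Fin n → ℝ) + x) = a x
    rw [add_comm, this]
    exact hper x z
  haveI : VAddCommClass (Fin n → ℝ) L (Fin n → ℝ) :=
    ⟨fun a b c => by
      show a + ((b : Fin n → ℝ) + c) = (b : Fin n → ℝ) + (a + c)
      ring⟩
  haveI : MeasurableVAdd (↥L) (Fin n → ℝ) :=
    { measurable_const_vadd := fun c => measurable_const_add (c : Fin n → ℝ),
      measurable_vadd_const := fun x => (measurable_subtype_coe).add_const x }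
  haveI : VAddInvariantMeasure (↥L) (Fin n → ℝ) volume :=
    ⟨fun c s hs => by
      show volume ((fun x => (c : Fin n → ℝ) + x) ⁻¹' s) = volume s
      exact measure_preimage_add volume _ s⟩
  have hFD' : IsAddFundamentalDomain L (t +ᵥ Dcube n) volume := hFD.vadd_of_comm t
  have h1 : ∫ u in (t +ᵥ Dcube n), a u = ∫ u in Dcube n, a (t + u) := by
    have himg : (t +ᵥ Dcube n) = (fun u => t + u) '' Dcube n := rfl
    rw [himg]
    exact (measurePreserving_add_left volume t).setIntegral_image_emb
      (measurableEmbedding_addLeft t) a (Dcube n)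
  rw [← h1]
  exact hFD'.setIntegral_eq hFD hinv

lemma claimA (a : (Fin n → ℝ) → ℂ) (f : (Fin n → ℝ) → ℂ) {k : ℕ} (hk : 1 ≤ k)
    (u : Fin n → ℝ) :
    ∫ x, a ((k:ℝ) • x) * f x = ∫ x, a ((k:ℝ) • x + u) * f (x + ((k:ℝ))⁻¹ • u) := by
  have h := MeasureTheory.integral_add_right_eq_self (μ := volume)
    (fun x => a ((k:ℝ) • x) * f x) (((k:ℝ))⁻¹ • u)
  rw [← h]
  refine integral_congr_ae (Eventually.of_forall fun x => ?_)
  have hk0 : (k:ℝ) ≠ 0 := Nat.cast_ne_zero.mpr (by omega)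
  have hsm : (k:ℝ) • (x + ((k:ℝ))⁻¹ • u) = (k:ℝ) • x + u := by
    rw [smul_add, smul_smul, mul_inv_cancel₀ hk0, one_smul]
  show a ((k:ℝ) • (x + ((k:ℝ))⁻¹ • u)) * f (x + ((k:ℝ))⁻¹ • u) = _
  rw [hsm]

lemma fubini_aux (a : (Fin n → ℝ) → ℂ) (hmeas : Measurable a) (C : ℝ)
    (hbdd : ∀ x, ‖a x‖ ≤ C)
    (hper : ∀ (x : Fin n → ℝ) (k : Fin n → ℤ), a (x + fun i => (k i : ℝ)) = a x)
    (f : (Fin n → ℝ) → ℂ) (hf : Integrable f) (k : ℕ) :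
    IntegrableOn (fun u => ∫ x, a ((k:ℝ) • x + u) * f x) (Dcube n) ∧
      ∫ u in Dcube n, (∫ x, a ((k:ℝ) • x + u) * f x) =
        (∫ y in Dcube n, a y) * ∫ x, f x := by
  have hC0 : 0 ≤ C := le_trans (norm_nonneg _) (hbdd 0)
  set μD := volume.restrict (Dcube n) with hμD
  haveI : IsFiniteMeasure μD := ⟨by
    rw [hμD, Measure.restrict_apply_univ, Dcube_vol]; exact ENNReal.one_lt_top⟩
  set F : ((Fin n → ℝ) × (Fin n → ℝ)) → ℂ :=
    fun p => a ((k:ℝ) • p.2 + p.1) * f p.2 with hF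
  have m1 : Measurable fun p : (Fin n → ℝ) × (Fin n → ℝ) => a ((k:ℝ) • p.2 + p.1) :=
    hmeas.comp ((measurable_snd.const_smul ((k:ℝ))).add measurable_fst)
  have m2 : AEStronglyMeasurable (fun p : (Fin n → ℝ) × (Fin n → ℝ) => f p.2)
      (μD.prod volume) :=
    hf.1.comp_quasiMeasurePreserving Measure.quasiMeasurePreserving_snd
  have hFmeas : AEStronglyMeasurable F (μD.prod volume) :=
    m1.aestronglyMeasurable.mul m2
  have hslice : ∀ u : Fin n → ℝ, Integrable (fun x => a ((k:ℝ) • x + u) * f x) volume := by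
    intro u
    refine hf.bdd_mul ?_ (ae_of_all _ fun x => hbdd _)
    exact (hmeas.comp ((measurable_id.const_smul ((k:ℝ))).add_const u)).aestronglyMeasurable
  have hFint : Integrable F (μD.prod volume) := by
    refine (integrable_prod_iff hFmeas).mpr ⟨Eventually.of_forall fun u => hslice u, ?_⟩
    refine Integrable.mono' (integrable_const (C * ∫ x, ‖f x‖)) hFmeas.norm.integral_prod_right' ?_
    refine Eventually.of_forall fun u => ?_
    have hpos : 0 ≤ ∫ x, ‖F (u, x)‖ := integral_nonneg fun x => norm_nonneg _
    rw [Real.norm_of_nonneg hpos]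
    have hb : ∀ x, ‖F (u, x)‖ ≤ C * ‖f x‖ := by
      intro x
      rw [hF]
      simp only [norm_mul]
      exact mul_le_mul_of_nonneg_right (hbdd _) (norm_nonneg _)
    calc ∫ x, ‖F (u, x)‖ ≤ ∫ x, C * ‖f x‖ :=
          integral_mono (hslice u).norm (hf.norm.const_mul C) hb
      _ = C * ∫ x, ‖f x‖ := integral_const_mul C _
  constructor
  · exact hFint.integral_prod_left
  · have hswap := integral_integral_swap (f := fun u x => F (u, x)) (μ := μD) (ν := volume) hFint
    rw [hμD] at hswap
    rw [hswap]
    have hinner : ∀ x : Fin n → ℝ,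
        ∫ u in Dcube n, F (u, x) = (∫ y in Dcube n, a y) * f x := by
      intro x
      have h2 : ∫ u in Dcube n, F (u, x) = (∫ u in Dcube n, a ((k:ℝ) • x + u)) * f x := by
        rw [hF]
        simpa using integral_smul_const (μ := volume.restrict (Dcube n))
          (fun u => a ((k:ℝ) • x + u)) (f x)
      rw [h2, claimC a hper ((k:ℝ) • x)]
    simp only [hinner]
    rw [integral_const_mul]

end MeanValueAux

/-- Mean value theorem for periodic functions: if `a : ℝⁿ → ℂ` is bounded, measurable
and `ℤⁿ`-periodic, then `a(k·)` converges weakly-* in `L^∞` to the constant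
`∫_{[0,1]ⁿ} a`, i.e. for every integrable `f`,
`∫ a(kx) f(x) dx → (∫_{[0,1]ⁿ} a)(∫ f)` as `k → ∞`. -/
theorem stmt_7 {n : ℕ} (a : (Fin n → ℝ) → ℂ)
    (hmeas : Measurable a) (C : ℝ) (hbdd : ∀ x, ‖a x‖ ≤ C)
    (hper : ∀ (x : Fin n → ℝ) (k : Fin n → ℤ), a (x + fun i => (k i : ℝ)) = a x) :
    ∀ f : (Fin n → ℝ) → ℂ, Integrable f →
      Tendsto (fun k : ℕ => ∫ x, a ((k : ℝ) • x) * f x) atTop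
        (nhds ((∫ y in Set.Icc (0 : Fin n → ℝ) 1, a y) * ∫ x, f x)) := by
  intro f hf
  have hC0 : 0 ≤ C := le_trans (norm_nonneg _) (hbdd 0)
  haveI : IsFiniteMeasure (volume.restrict (Dcube n)) := ⟨by
    rw [Measure.restrict_apply_univ, Dcube_vol]; exact ENNReal.one_lt_top⟩
  rw [Metric.tendsto_atTop]
  intro ε hε
  set ε' := ε / (2 * (C + 1)) with hε'def
  have hε' : 0 < ε' := by positivity
  obtain ⟨δ, hδ0, hδ⟩ := Metric.tendsto_nhds_nhds.mp (aux_trans f hf) ε' hε'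
  obtain ⟨N, hN⟩ := exists_nat_gt (max 1 δ⁻¹)
  refine ⟨N, fun k hk => ?_⟩
  have hN1 : (1:ℝ) < N := lt_of_le_of_lt (le_max_left _ _) hN
  have hk1 : 1 ≤ k := by
    have : (1:ℝ) < (k:ℝ) := lt_of_lt_of_le hN1 (Nat.cast_le.mpr hk)
    exact_mod_cast this.le
  have hkpos : (0:ℝ) < (k:ℝ) := by positivity
  have hkinv : ((k:ℝ))⁻¹ < δ := by
    have h1 : δ⁻¹ < (k:ℝ) :=
      lt_of_le_of_lt (le_max_right 1 δ⁻¹) (lt_of_lt_of_le hN (Nat.cast_le.mpr hk))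
    have h2 := inv_strictAnti₀ (by positivity) h1
    rwa [inv_inv] at h2
  obtain ⟨hg₂int, hMid⟩ := fubini_aux a hmeas C hbdd hper f hf k
  set Tk := ∫ x, a ((k:ℝ) • x) * f x with hTk
  set g₂ : (Fin n → ℝ) → ℂ := fun u => ∫ x, a ((k:ℝ) • x + u) * f x with hg₂
  have hM : (∫ y in Set.Icc (0 : Fin n → ℝ) 1, a y) * ∫ x, f x = ∫ u in Dcube n, g₂ u := by
    rw [integral_Icc_eq_Dcube, ← hMid]
  rw [dist_eq_norm, hM]
  have hrepr : Tk - ∫ u in Dcube n, g₂ u = ∫ u in Dcube n, (Tk - g₂ u) := by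
    rw [integral_sub (integrable_const _) hg₂int, setIntegral_const, measureReal_def, Dcube_vol]
    simp
  rw [hrepr]
  have hptw : ∀ u ∈ Dcube n, ‖Tk - g₂ u‖ ≤ ε / 2 := by
    intro u hu
    set w := ((k:ℝ))⁻¹ • u with hw
    have hwnorm : ‖w‖ < δ := by
      rw [hw, norm_smul, Real.norm_eq_abs, abs_of_nonneg (by positivity)]
      calc ((k:ℝ))⁻¹ * ‖u‖ ≤ ((k:ℝ))⁻¹ * 1 :=
            mul_le_mul_of_nonneg_left (Dcube_norm_le hu) (by positivity)
        _ = ((k:ℝ))⁻¹ := mul_one _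
        _ < δ := hkinv
    have hψ : (∫ x, ‖f (x + w) - f x‖) < ε' := by
      have := hδ (by simpa [dist_eq_norm] using hwnorm)
      rw [Real.dist_eq] at this
      calc (∫ x, ‖f (x + w) - f x‖) ≤ |(∫ x, ‖f (x + w) - f x‖)| := le_abs_self _
        _ = |(∫ x, ‖f (x + w) - f x‖) - 0| := by rw [sub_zero]
        _ < ε' := this
    have hmeasu : Measurable fun x => a ((k:ℝ) • x + u) :=
      hmeas.comp ((measurable_id.const_smul ((k:ℝ))).add_const u)
    have i1 : Integrable (fun x => a ((k:ℝ) • x + u) * f (x + w)) volume :=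
      (hf.comp_add_right w).bdd_mul hmeasu.aestronglyMeasurable (ae_of_all _ fun x => hbdd _)
    have i2 : Integrable (fun x => a ((k:ℝ) • x + u) * f x) volume :=
      hf.bdd_mul hmeasu.aestronglyMeasurable (ae_of_all _ fun x => hbdd _)
    have hTkeq : Tk = ∫ x, a ((k:ℝ) • x + u) * f (x + w) := claimA a f hk1 u
    rw [hTkeq, hg₂, ← integral_sub i1 i2]
    have hcomb : (fun x => a ((k:ℝ) • x + u) * f (x + w) - a ((k:ℝ) • x + u) * f x)
        = fun x => a ((k:ℝ) • x + u) * (f (x + w) - f x) := by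
      funext x; rw [mul_sub]
    rw [hcomb]
    have hbound : ‖∫ x, a ((k:ℝ) • x + u) * (f (x + w) - f x)‖
        ≤ ∫ x, C * ‖f (x + w) - f x‖ := by
      refine norm_integral_le_of_norm_le (((hf.comp_add_right w).sub hf).norm.const_mul C) ?_
      refine Eventually.of_forall fun x => ?_
      rw [norm_mul]
      exact mul_le_mul_of_nonneg_right (hbdd _) (norm_nonneg _)
    calc ‖∫ x, a ((k:ℝ) • x + u) * (f (x + w) - f x)‖
        ≤ ∫ x, C * ‖f (x + w) - f x‖ := hbound
      _ = C * ∫ x, ‖f (x + w) - f x‖ := integral_const_mul C _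
      _ ≤ C * ε' := mul_le_mul_of_nonneg_left hψ.le hC0
      _ ≤ (C + 1) * ε' := mul_le_mul_of_nonneg_right (by linarith) hε'.le
      _ = ε / 2 := by
          rw [hε'def]
          field_simp
  calc ‖∫ u in Dcube n, (Tk - g₂ u)‖
      ≤ (ε / 2) * (volume (Dcube n)).toReal :=
        norm_setIntegral_le_of_norm_le_const (by rw [Dcube_vol]; exact ENNReal.one_lt_top)
          hptw
    _ = ε / 2 := by rw [Dcube_vol]; simp
    _ < ε := by linarith
end

section
/- Let ν > 0 and let ∂₀⁻¹ denote the operator on L²_ν(ℝ) := L²(ℝ, e^{−2νt} dt) given by (∂₀⁻¹ f)(t) = ∫_{−∞}^t f(s) ds. Then ∂₀⁻¹ is a bounded linear operator on L²_ν(ℝ) with operator norm at most 1/ν. -/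
open MeasureTheory Real Set Filter
open scoped ENNReal NNReal

lemma expMulDeriv {c : ℝ} (hc : c ≠ 0) (x : ℝ) :
    HasDerivAt (fun y => Real.exp (c * y) / c) (Real.exp (c * x)) x := by
  have h := (((hasDerivAt_id x).const_mul c).exp).div_const c
  exact h.congr_deriv (by simp [hc])

lemma expNegMulDeriv {c : ℝ} (hc : c ≠ 0) (x : ℝ) :
    HasDerivAt (fun y => -(Real.exp (-(c * y)) / c)) (Real.exp (-(c * x))) x := by
  have h := ((((hasDerivAt_id x).const_mul c).neg).exp.div_const c).neg
  exact h.congr_deriv (by simp; field_simp)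

lemma integrableOn_exp_mul_Iic' {c : ℝ} (hc : 0 < c) (t : ℝ) :
    IntegrableOn (fun s => Real.exp (c * s)) (Set.Iic t) := by
  have hcont : Continuous fun s : ℝ => Real.exp (c * s) := by continuity
  refine integrableOn_Iic_of_intervalIntegral_norm_bounded (Real.exp (c * t) / c) t
    (fun y : ℝ => hcont.integrableOn_Ioc) tendsto_id ?_
  filter_upwards [Iic_mem_atBot t] with y (hy : y ≤ t)
  simp only [id]
  have hnn : EqOn (fun x => ‖Real.exp (c * x)‖) (fun x => Real.exp (c * x)) (uIcc y t) :=
    fun x _ => Real.norm_of_nonneg (Real.exp_pos _).le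
  rw [show (∫ x in y..t, ‖Real.exp (c * x)‖) = ∫ x in y..t, Real.exp (c * x) from
    intervalIntegral.integral_congr hnn]
  rw [intervalIntegral.integral_eq_sub_of_hasDerivAt (fun x _ => expMulDeriv hc.ne' x)
    (hcont.intervalIntegrable y t)]
  have h1 : 0 ≤ Real.exp (c * y) / c := by positivity
  linarith

lemma lintegral_exp_mul_Iic {c : ℝ} (hc : 0 < c) (t : ℝ) :
    ∫⁻ s in Set.Iic t, ENNReal.ofReal (Real.exp (c * s)) =
      ENNReal.ofReal (Real.exp (c * t) / c) := by
  rw [← MeasureTheory.ofReal_integral_eq_lintegral_ofReal (integrableOn_exp_mul_Iic' hc t)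
    (ae_of_all _ fun x => (Real.exp_pos _).le)]
  congr 1
  have hlim : Tendsto (fun x => Real.exp (c * x) / c) atBot (nhds 0) := by
    have h1 : Tendsto (fun x : ℝ => c * x) atBot atBot :=
      Tendsto.const_mul_atBot hc tendsto_id
    simpa using (Real.tendsto_exp_atBot.comp h1).div_const c
  have := integral_Iic_of_hasDerivAt_of_tendsto (f := fun x => Real.exp (c * x) / c)
    (f' := fun x => Real.exp (c * x)) (a := t)
    (Continuous.continuousWithinAt (by continuity))
    (fun x _ => expMulDeriv hc.ne' x) (integrableOn_exp_mul_Iic' hc t) hlim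
  rw [this, sub_zero]

lemma lintegral_exp_neg_mul_Ici {c : ℝ} (hc : 0 < c) (s : ℝ) :
    ∫⁻ t in Set.Ici s, ENNReal.ofReal (Real.exp (-(c * t))) =
      ENNReal.ofReal (Real.exp (-(c * s)) / c) := by
  have hint : IntegrableOn (fun x => Real.exp (-(c * x))) (Set.Ioi s) := by
    have := exp_neg_integrableOn_Ioi s hc
    simpa [neg_mul] using this
  rw [← MeasureTheory.setLIntegral_congr (Ioi_ae_eq_Ici (a := s))]
  rw [← MeasureTheory.ofReal_integral_eq_lintegral_ofReal hint
    (ae_of_all _ fun x => (Real.exp_pos _).le)]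
  congr 1
  have hlim : Tendsto (fun x => -(Real.exp (-(c * x)) / c)) atTop (nhds 0) := by
    have h1 : Tendsto (fun x : ℝ => c * x) atTop atTop :=
      Tendsto.const_mul_atTop hc tendsto_id
    have h2 : Tendsto (fun x : ℝ => -(c * x)) atTop atBot := tendsto_neg_atTop_atBot.comp h1
    simpa using ((Real.tendsto_exp_atBot.comp h2).div_const c).neg
  have := integral_Ioi_of_hasDerivAt_of_tendsto
    (f := fun x => -(Real.exp (-(c * x)) / c))
    (f' := fun x => Real.exp (-(c * x))) (a := s)
    (Continuous.continuousWithinAt (by continuity))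
    (fun x _ => expNegMulDeriv hc.ne' x) hint hlim
  rw [this]
  ring

lemma csStep {ν : ℝ} (hν : 0 < ν) (f : ℝ → ℂ) (hf : Measurable f) (t : ℝ) :
    (‖∫ s in Set.Iic t, f s‖₊ : ℝ≥0∞) ^ 2
      ≤ (∫⁻ s in Set.Iic t, (‖f s‖₊ : ℝ≥0∞) ^ 2 * ENNReal.ofReal (Real.exp (-(ν * s))))
        * ENNReal.ofReal (Real.exp (ν * t) / ν) := by
  set a : ℝ → ℝ≥0∞ := fun s => (‖f s‖₊ : ℝ≥0∞) * ENNReal.ofReal (Real.exp (-(ν * s) / 2))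
  set b : ℝ → ℝ≥0∞ := fun s => ENNReal.ofReal (Real.exp (ν * s / 2))
  have ha : Measurable a :=
    (hf.nnnorm.coe_nnreal_ennreal).mul (ENNReal.measurable_ofReal.comp (by fun_prop))
  have hb : Measurable b := ENNReal.measurable_ofReal.comp (by fun_prop)
  have hab : ∀ s, (‖f s‖₊ : ℝ≥0∞) = a s * b s := by
    intro s
    simp only [a, b, mul_assoc, ← ENNReal.ofReal_mul (Real.exp_pos _).le, ← Real.exp_add]
    rw [show -(ν * s) / 2 + ν * s / 2 = 0 by ring]
    simp
  have hpq : Real.HolderConjugate 2 2 := Real.HolderConjugate.two_two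
  have hCS := ENNReal.lintegral_mul_le_Lp_mul_Lq (volume.restrict (Set.Iic t)) hpq
    ha.aemeasurable hb.aemeasurable
  have h0 : (‖∫ s in Set.Iic t, f s‖₊ : ℝ≥0∞) ≤ ∫⁻ s in Set.Iic t, (‖f s‖₊ : ℝ≥0∞) :=
    enorm_integral_le_lintegral_enorm f
  have ha2 : ∀ s, a s ^ (2 : ℝ) = (‖f s‖₊ : ℝ≥0∞) ^ 2 * ENNReal.ofReal (Real.exp (-(ν * s))) := by
    intro s
    rw [ENNReal.mul_rpow_of_nonneg _ _ (by norm_num : (0:ℝ) ≤ 2),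
      ENNReal.ofReal_rpow_of_pos (Real.exp_pos _), ← Real.exp_mul,
      show -(ν * s) / 2 * 2 = -(ν * s) by ring, ENNReal.rpow_two]
  have hb2 : ∀ s, b s ^ (2 : ℝ) = ENNReal.ofReal (Real.exp (ν * s)) := by
    intro s
    rw [ENNReal.ofReal_rpow_of_pos (Real.exp_pos _), ← Real.exp_mul,
      show ν * s / 2 * 2 = ν * s by ring]
  calc (‖∫ s in Set.Iic t, f s‖₊ : ℝ≥0∞) ^ 2
      ≤ (∫⁻ s in Set.Iic t, (‖f s‖₊ : ℝ≥0∞)) ^ 2 := pow_le_pow_left' h0 2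
    _ = (∫⁻ s in Set.Iic t, a s * b s) ^ 2 := by simp_rw [← hab]
    _ ≤ ((∫⁻ s in Set.Iic t, a s ^ (2:ℝ)) ^ (1/(2:ℝ))
          * (∫⁻ s in Set.Iic t, b s ^ (2:ℝ)) ^ (1/(2:ℝ))) ^ 2 := pow_le_pow_left' hCS 2
    _ = (∫⁻ s in Set.Iic t, a s ^ (2:ℝ)) * (∫⁻ s in Set.Iic t, b s ^ (2:ℝ)) := by
        rw [mul_pow, ← ENNReal.rpow_natCast (_ ^ _), ← ENNReal.rpow_natCast (_ ^ _),
          ← ENNReal.rpow_mul, ← ENNReal.rpow_mul]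
        norm_num
    _ = (∫⁻ s in Set.Iic t, (‖f s‖₊ : ℝ≥0∞) ^ 2 * ENNReal.ofReal (Real.exp (-(ν * s))))
          * ENNReal.ofReal (Real.exp (ν * t) / ν) := by
        simp_rw [ha2, hb2]
        rw [lintegral_exp_mul_Iic hν t]

lemma swapStep {ν : ℝ} (hν : 0 < ν) (G : ℝ → ℝ≥0∞) (hG : Measurable G) :
    ∫⁻ t, (∫⁻ s in Set.Iic t, G s) * ENNReal.ofReal (Real.exp (-(ν * t)))
      = ∫⁻ s, G s * ENNReal.ofReal (Real.exp (-(ν * s)) / ν) := by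
  have hH : Measurable fun t : ℝ => ENNReal.ofReal (Real.exp (-(ν * t))) :=
    ENNReal.measurable_ofReal.comp (by fun_prop)
  have h1 : ∀ t : ℝ, (∫⁻ s in Set.Iic t, G s) * ENNReal.ofReal (Real.exp (-(ν * t)))
      = ∫⁻ s, (Set.Iic t).indicator G s * ENNReal.ofReal (Real.exp (-(ν * t))) := by
    intro t
    rw [← lintegral_indicator measurableSet_Iic G,
      ← lintegral_mul_const _ (hG.indicator measurableSet_Iic)]
  simp_rw [h1]
  rw [lintegral_lintegral_swap]
  · congr 1
    funext s
    have h2 : ∀ t : ℝ, (Set.Iic t).indicator G s * ENNReal.ofReal (Real.exp (-(ν * t)))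
        = (Set.Ici s).indicator (fun t => G s * ENNReal.ofReal (Real.exp (-(ν * t)))) t := by
      intro t
      simp only [Set.indicator_apply, Set.mem_Iic, Set.mem_Ici]
      by_cases h : s ≤ t <;> simp [h]
    simp_rw [h2]
    rw [lintegral_indicator measurableSet_Ici _, lintegral_const_mul _ hH,
      lintegral_exp_neg_mul_Ici hν s]
  · have : (Function.uncurry fun t s =>
        (Set.Iic t).indicator G s * ENNReal.ofReal (Real.exp (-(ν * t))))
        = fun p : ℝ × ℝ => ({q : ℝ × ℝ | q.2 ≤ q.1}.indicator (fun q => G q.2) p)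
            * ENNReal.ofReal (Real.exp (-(ν * p.1))) := by
      funext p
      simp only [Function.uncurry, Set.indicator_apply, Set.mem_Iic, Set.mem_setOf_eq]
    rw [this]
    exact (((hG.comp measurable_snd).indicator
      (measurableSet_le measurable_snd measurable_fst)).mul
      (hH.comp measurable_fst)).aemeasurable

/-- The integration operator `∂₀⁻¹ : f ↦ (t ↦ ∫_{−∞}^t f)` is bounded on the
exponentially weighted space `L²_ν(ℝ) = L²(ℝ, e^{−2νt} dt)` with norm at most `1/ν`:
for every `f` with finite weighted `L²`-norm,
`∫ ‖∫_{−∞}^t f‖² e^{−2νt} dt ≤ (1/ν)² ∫ ‖f‖² e^{−2νt} dt`. -/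
theorem stmt_9 (ν : ℝ) (hν : 0 < ν) (f : ℝ → ℂ) (hf : Measurable f)
    (hfL2 : ∫⁻ t, (‖f t‖₊ : ENNReal) ^ 2 * ENNReal.ofReal (Real.exp (-(2 * ν * t))) < ⊤) :
    ∫⁻ t, (‖∫ s in Set.Iic t, f s‖₊ : ENNReal) ^ 2 * ENNReal.ofReal (Real.exp (-(2 * ν * t)))
      ≤ ENNReal.ofReal ((1 / ν) ^ 2) *
        ∫⁻ t, (‖f t‖₊ : ENNReal) ^ 2 * ENNReal.ofReal (Real.exp (-(2 * ν * t))) := by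
  set G : ℝ → ℝ≥0∞ := fun s => (‖f s‖₊ : ℝ≥0∞) ^ 2 * ENNReal.ofReal (Real.exp (-(ν * s)))
    with hGdef
  have hGmeas : Measurable G :=
    ((hf.nnnorm.coe_nnreal_ennreal).pow_const 2).mul (ENNReal.measurable_ofReal.comp (by fun_prop))
  have hH : Measurable fun t : ℝ => ENNReal.ofReal (Real.exp (-(ν * t))) :=
    ENNReal.measurable_ofReal.comp (by fun_prop)
  have hIic : Measurable fun t : ℝ => ∫⁻ s in Set.Iic t, G s := by
    apply Monotone.measurable
    intro t₁ t₂ h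
    exact lintegral_mono_set (Set.Iic_subset_Iic.2 h)
  have hpt : ∀ t, (‖∫ s in Set.Iic t, f s‖₊ : ℝ≥0∞) ^ 2
        * ENNReal.ofReal (Real.exp (-(2 * ν * t)))
      ≤ ENNReal.ofReal (1/ν)
          * ((∫⁻ s in Set.Iic t, G s) * ENNReal.ofReal (Real.exp (-(ν * t)))) := by
    intro t
    calc (‖∫ s in Set.Iic t, f s‖₊ : ℝ≥0∞) ^ 2 * ENNReal.ofReal (Real.exp (-(2 * ν * t)))
        ≤ (∫⁻ s in Set.Iic t, G s) * ENNReal.ofReal (Real.exp (ν * t) / ν)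
            * ENNReal.ofReal (Real.exp (-(2 * ν * t))) :=
          mul_le_mul_left (csStep hν f hf t) _
      _ = ENNReal.ofReal (1/ν)
            * ((∫⁻ s in Set.Iic t, G s) * ENNReal.ofReal (Real.exp (-(ν * t)))) := by
          rw [mul_assoc, ← ENNReal.ofReal_mul (by positivity),
            show Real.exp (ν * t) / ν * Real.exp (-(2 * ν * t))
              = 1/ν * Real.exp (-(ν * t)) by
                rw [div_mul_eq_mul_div, ← Real.exp_add, show ν * t + -(2 * ν * t) = -(ν * t)
                  by ring]
                ring,
            ENNReal.ofReal_mul (by positivity)]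
          ring
  calc ∫⁻ t, (‖∫ s in Set.Iic t, f s‖₊ : ℝ≥0∞) ^ 2 * ENNReal.ofReal (Real.exp (-(2 * ν * t)))
      ≤ ∫⁻ t, ENNReal.ofReal (1/ν)
          * ((∫⁻ s in Set.Iic t, G s) * ENNReal.ofReal (Real.exp (-(ν * t)))) :=
        lintegral_mono hpt
    _ = ENNReal.ofReal (1/ν)
          * ∫⁻ t, (∫⁻ s in Set.Iic t, G s) * ENNReal.ofReal (Real.exp (-(ν * t))) :=
        lintegral_const_mul _ (hIic.mul hH)
    _ = ENNReal.ofReal (1/ν) * ∫⁻ s, G s * ENNReal.ofReal (Real.exp (-(ν * s)) / ν) := by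
        rw [swapStep hν G hGmeas]
    _ = ENNReal.ofReal ((1/ν) ^ 2)
          * ∫⁻ t, (‖f t‖₊ : ℝ≥0∞) ^ 2 * ENNReal.ofReal (Real.exp (-(2 * ν * t))) := by
        have hpw : ∀ s : ℝ, G s * ENNReal.ofReal (Real.exp (-(ν * s)) / ν)
            = ENNReal.ofReal (1/ν)
              * ((‖f s‖₊ : ℝ≥0∞) ^ 2 * ENNReal.ofReal (Real.exp (-(2 * ν * s)))) := by
          intro s
          rw [hGdef]
          simp only
          rw [mul_assoc, ← ENNReal.ofReal_mul (Real.exp_pos _).le,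
            show Real.exp (-(ν * s)) * (Real.exp (-(ν * s)) / ν)
              = 1/ν * Real.exp (-(2 * ν * s)) by
                rw [mul_div_assoc', ← Real.exp_add, show -(ν * s) + -(ν * s) = -(2 * ν * s)
                  by ring]
                ring,
            ENNReal.ofReal_mul (by positivity)]
          ring
        have hmeas2 : Measurable fun s : ℝ =>
            (‖f s‖₊ : ℝ≥0∞) ^ 2 * ENNReal.ofReal (Real.exp (-(2 * ν * s))) :=
          ((hf.nnnorm.coe_nnreal_ennreal).pow_const 2).mul
            (ENNReal.measurable_ofReal.comp (by fun_prop))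
        simp_rw [hpw]
        rw [lintegral_const_mul _ hmeas2, ← mul_assoc,
          ← ENNReal.ofReal_mul (by positivity), sq]
end

section
/- Let ν > 0, h ∈ ℝ, and let τ_{−h} denote translation (τ_{−h}f)(t) = f(t−h) on L²_ν(ℝ). Then τ_{−h} = L_ν^* e^{−h(im+ν)} L_ν, where L_ν is the Fourier–Laplace transform (the unitary extension of φ ↦ (x ↦ (2π)^{−1/2} ∫ e^{−ixy−νy}φ(y)dy)) and e^{−h(im+ν)} is multiplication by t ↦ e^{−h(it+ν)} on L²(ℝ). In particular τ_{−h} is bounded on L²_ν(ℝ) with norm e^{−hν}. -/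
open MeasureTheory

/-- The Fourier–Laplace transform `L_ν φ (x) = (2π)^{−1/2} ∫ e^{−ixy−νy} φ(y) dy`. -/
noncomputable def fourierLaplace (ν : ℝ) (φ : ℝ → ℂ) : ℝ → ℂ := fun x =>
  (1 / Real.sqrt (2 * Real.pi) : ℝ) •
    ∫ y : ℝ, Complex.exp (-(Complex.I * x * y) - ν * y) * φ y

/-- Translation is unitarily equivalent, via the Fourier–Laplace transform `L_ν`, to
multiplication by `e^{−h(it+ν)}`: `L_ν (τ_{−h} φ) = e^{−h(im+ν)} L_ν φ`, i.e.
`τ_{−h} = L_ν^* e^{−h(im+ν)} L_ν`. In particular `τ_{−h}` is bounded on `L²_ν(ℝ)`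
with norm `e^{−hν}`:  `∫‖φ(t−h)‖²e^{−2νt} dt = e^{−2hν} ∫‖φ‖²e^{−2νt} dt`. -/
theorem stmt_18 (ν : ℝ) (hν : 0 < ν) (h : ℝ) :
    (∀ φ : ℝ → ℂ, Measurable φ →
      Integrable (fun y : ℝ => Complex.exp (-(ν : ℂ) * y) * φ y) →
      ∀ x : ℝ,
        fourierLaplace ν (fun t => φ (t - h)) x =
          Complex.exp (-(h : ℂ) * (Complex.I * x + ν)) * fourierLaplace ν φ x) ∧
    (∀ φ : ℝ → ℂ,
      ∫⁻ t, (‖φ (t - h)‖₊ : ENNReal) ^ 2 * ENNReal.ofReal (Real.exp (-(2 * ν * t)))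
        = ENNReal.ofReal (Real.exp (-(2 * h * ν))) *
          ∫⁻ t, (‖φ t‖₊ : ENNReal) ^ 2 * ENNReal.ofReal (Real.exp (-(2 * ν * t)))) := by
  constructor
  · intro φ _ _ x
    unfold fourierLaplace
    have key : (∫ y : ℝ, Complex.exp (-(Complex.I * x * y) - ν * y) * φ (y - h))
        = Complex.exp (-(h:ℂ) * (Complex.I * x + ν)) *
          ∫ y : ℝ, Complex.exp (-(Complex.I * x * y) - ν * y) * φ y := by
      rw [← integral_const_mul]
      rw [← MeasureTheory.integral_add_right_eq_self
        (fun y : ℝ => Complex.exp (-(Complex.I * x * y) - ν * y) * φ (y - h)) h]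
      congr 1
      ext y
      have : -(Complex.I * x * ((y : ℂ) + h)) - ν * ((y : ℂ) + h)
          = (-(h:ℂ) * (Complex.I * x + ν)) + (-(Complex.I * x * y) - ν * y) := by
        ring
      simp only [add_sub_cancel_right]
      push_cast
      rw [this, Complex.exp_add, mul_assoc]
    rw [key, mul_smul_comm]
  · intro φ
    have key : (∫⁻ t, (‖φ (t - h)‖₊ : ENNReal) ^ 2 * ENNReal.ofReal (Real.exp (-(2 * ν * t))))
        = ∫⁻ t, (‖φ t‖₊ : ENNReal) ^ 2 * ENNReal.ofReal (Real.exp (-(2 * ν * (t + h)))) := by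
      rw [← MeasureTheory.lintegral_add_right_eq_self
        (fun t => (‖φ (t - h)‖₊ : ENNReal) ^ 2 * ENNReal.ofReal (Real.exp (-(2 * ν * t)))) h]
      simp only [add_sub_cancel_right]
    rw [key, ← MeasureTheory.lintegral_const_mul' _ _ (by simp)]
    congr 1
    ext t
    rw [show -(2 * ν * (t + h)) = -(2 * h * ν) + -(2 * ν * t) by ring, Real.exp_add,
      ENNReal.ofReal_mul (Real.exp_nonneg _)]
    ring
end
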